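/- For n ≥ 4 and k ∈ [1, n−2], the digraph D_1 obtained from the complete digraphs K*_{n−k} and K*_{k+1} by identifying one vertex of the first with one vertex of the second satisfies condition A_{−1}, but contains no Hamiltonian bypass. -/

import Mathlib

open Finset

/-- A list of distinct vertices whose consecutive members are joined by arcs. -/
def IsPathList {V : Type*} (A : V → V → Prop) (p : List V) : Prop :=
  p.Nodup ∧ p.Chain' A

/-- A directed cycle: at least two distinct vertices, consecutive arcs, and an arc
from the last vertex back to the first. -/
def IsCycleList {V : Type*} (A : V → V → Prop) (c : List V) : Prop :=
  2 ≤ c.length ∧ c.Nodup ∧ c.Chain' A ∧ ∀ h : c ≠ [], A (c.getLast h) (c.head h)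

/-- A Hamiltonian bypass: a Hamiltonian path `v₁ v₂ … vₙ` together with the arc `v₁ vₙ`. -/
def HasHamBypass {V : Type*} (A : V → V → Prop) : Prop :=
  ∃ l : List V, l.Nodup ∧ (∀ v, v ∈ l) ∧ l.Chain' A ∧
    ∀ h : l ≠ [], A (l.head h) (l.getLast h)

/-- A Hamiltonian cycle. -/
def HasHamCycle {V : Type*} (A : V → V → Prop) : Prop :=
  ∃ c : List V, IsCycleList A c ∧ ∀ v, v ∈ c

/-- out-degree of `x` towards a set `S`. -/
def outDegOn {V : Type*} [DecidableEq V] (A : V → V → Prop) [DecidableRel A]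
    (x : V) (S : Finset V) : ℕ := (S.filter fun y => A x y).card

/-- in-degree of `x` from a set `S`. -/
def inDegOn {V : Type*} [DecidableEq V] (A : V → V → Prop) [DecidableRel A]
    (x : V) (S : Finset V) : ℕ := (S.filter fun y => A y x).card

/-- degree of `x` with respect to a set `S` (arcs in both directions). -/
def degOn {V : Type*} [DecidableEq V] (A : V → V → Prop) [DecidableRel A]
    (x : V) (S : Finset V) : ℕ := outDegOn A x S + inDegOn A x S

/-- out-degree of `x`. -/
def outDeg {V : Type*} [Fintype V] [DecidableEq V] (A : V → V → Prop) [DecidableRel A]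
    (x : V) : ℕ := outDegOn A x Finset.univ

/-- in-degree of `x`. -/
def inDeg {V : Type*} [Fintype V] [DecidableEq V] (A : V → V → Prop) [DecidableRel A]
    (x : V) : ℕ := inDegOn A x Finset.univ

/-- degree of `x`. -/
def deg {V : Type*} [Fintype V] [DecidableEq V] (A : V → V → Prop) [DecidableRel A]
    (x : V) : ℕ := outDeg A x + inDeg A x

/-- The condition `A_k` of Manoussakis: for every triple of distinct vertices `x, y, z`
with `x` and `y` non-adjacent, if `xz` is not an arc then
`d(x)+d(y)+d⁺(x)+d⁻(z) ≥ 3n-2+k`, and if `zx` is not an arc then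
`d(x)+d(y)+d⁻(x)+d⁺(z) ≥ 3n-2+k`. -/
def CondA {V : Type*} [Fintype V] [DecidableEq V] (A : V → V → Prop) [DecidableRel A]
    (k : ℤ) : Prop :=
  ∀ x y z : V, x ≠ y → z ≠ x → z ≠ y → ¬A x y → ¬A y x →
    (¬A x z → (deg A x + deg A y + outDeg A x + inDeg A z : ℤ) ≥
      3 * (Fintype.card V : ℤ) - 2 + k) ∧
    (¬A z x → (deg A x + deg A y + inDeg A x + outDeg A z : ℤ) ≥
      3 * (Fintype.card V : ℤ) - 2 + k)


/-- the digraph `D₁` obtained from two complete digraphs `K*_{n-k}` and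
`K*_{k+1}` sharing exactly one vertex satisfies `A_{-1}` but has no Hamiltonian
bypass.  Vertices `0,…,n-k-1` carry the first complete digraph and vertices
`n-k-1,…,n-1` the second. -/
theorem stmt12 (n k : ℕ) (hn : 4 ≤ n) (hk1 : 1 ≤ k) (hk2 : k ≤ n - 2)
    (A : Fin n → Fin n → Prop) [DecidableRel A]
    (hA : ∀ u v : Fin n, A u v ↔ u ≠ v ∧
      ((u.val ≤ n - k - 1 ∧ v.val ≤ n - k - 1) ∨
       (n - k - 1 ≤ u.val ∧ n - k - 1 ≤ v.val))) :
    CondA A (-1) ∧ ¬HasHamBypass A := by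
  -- abbreviation for the cut index
  set m : ℕ := n - k - 1 with hmdef
  have hm1 : 1 ≤ m := by omega
  have hmn : m < n := by omega
  have hm2 : m + 1 < n := by omega
  have hkm : n - m = k + 1 := by omega
  classical
  -- the two "cliques"
  set Lset : Finset (Fin n) := univ.filter (fun y : Fin n => y.val ≤ m) with hLdef
  set Rset : Finset (Fin n) := univ.filter (fun y : Fin n => m ≤ y.val) with hRdef
  have cardL : Lset.card = m + 1 := by
    rw [hLdef]
    rw [show m + 1 = (Finset.range (m+1)).card from (Finset.card_range _).symm]
    apply Finset.card_bij (fun (a : Fin n) _ => a.val)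
    · intro a ha; simp only [mem_filter, mem_univ, true_and] at ha
      simp [Finset.mem_range]; omega
    · intro a _ b _ h; exact Fin.ext h
    · intro b hb; simp only [Finset.mem_range] at hb
      exact ⟨⟨b, by omega⟩, by simp; omega, rfl⟩
  have cardR : Rset.card = k + 1 := by
    have h1 : Lset.card + Rset.card = n + 1 := by
      have : (univ.filter (fun y : Fin n => y.val < m)).card = m := by
        rw [show m = (Finset.range m).card from (Finset.card_range _).symm]
        apply Finset.card_bij (fun (a : Fin n) _ => a.val)
        · intro a ha; simp only [mem_filter, mem_univ, true_and] at ha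
          simpa [Finset.mem_range] using ha
        · intro a _ b _ h; exact Fin.ext h
        · intro b hb; simp only [Finset.mem_range] at hb
          exact ⟨⟨b, by omega⟩, by simp; omega, rfl⟩
      have hneg : Rset = univ.filter (fun y : Fin n => ¬ y.val < m) := by
        rw [hRdef]; apply Finset.filter_congr; intro y _; constructor <;> omega
      have h2 : (univ.filter (fun y : Fin n => y.val < m)).card + Rset.card
          = Fintype.card (Fin n) := by
        rw [hneg]
        rw [Finset.card_filter_add_card_filter_not
          (s := (univ : Finset (Fin n))) (p := fun y : Fin n => y.val < m)]
        simp
      rw [this] at h2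
      rw [Fintype.card_fin] at h2
      omega
    omega
  -- membership in cliques
  have memL : ∀ x : Fin n, x.val ≤ m → x ∈ Lset := by
    intro x hx; simp [hLdef, hx]
  have memR : ∀ x : Fin n, m ≤ x.val → x ∈ Rset := by
    intro x hx; simp [hRdef, hx]
  -- degrees of "left" vertices
  have degLout : ∀ x : Fin n, x.val < m → outDeg A x = m := by
    intro x hx
    have hfilter : univ.filter (fun y => A x y) = Lset.erase x := by
      ext y
      simp only [mem_filter, mem_univ, true_and, Finset.mem_erase, hA, hLdef,
        ne_eq, Fin.ext_iff]
      omega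
    unfold outDeg outDegOn
    rw [hfilter, Finset.card_erase_of_mem (memL x (by omega)), cardL]
    omega
  have degLin : ∀ x : Fin n, x.val < m → inDeg A x = m := by
    intro x hx
    have hfilter : univ.filter (fun y => A y x) = Lset.erase x := by
      ext y
      simp only [mem_filter, mem_univ, true_and, Finset.mem_erase, hA, hLdef,
        ne_eq, Fin.ext_iff]
      omega
    unfold inDeg inDegOn
    rw [hfilter, Finset.card_erase_of_mem (memL x (by omega)), cardL]
    omega
  -- degrees of "right" vertices
  have degRout : ∀ x : Fin n, m < x.val → outDeg A x = k := by
    intro x hx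
    have hfilter : univ.filter (fun y => A x y) = Rset.erase x := by
      ext y
      simp only [mem_filter, mem_univ, true_and, Finset.mem_erase, hA, hRdef,
        ne_eq, Fin.ext_iff]
      omega
    unfold outDeg outDegOn
    rw [hfilter, Finset.card_erase_of_mem (memR x (by omega)), cardR]
    omega
  have degRin : ∀ x : Fin n, m < x.val → inDeg A x = k := by
    intro x hx
    have hfilter : univ.filter (fun y => A y x) = Rset.erase x := by
      ext y
      simp only [mem_filter, mem_univ, true_and, Finset.mem_erase, hA, hRdef,
        ne_eq, Fin.ext_iff]
      omega
    unfold inDeg inDegOn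
    rw [hfilter, Finset.card_erase_of_mem (memR x (by omega)), cardR]
    omega
  constructor
  · -- condition A_{-1}
    intro x y z hxy hzx hzy hnxy hnyx
    -- x and y are on strictly opposite sides
    have hside : (x.val < m ∧ m < y.val) ∨ (m < x.val ∧ y.val < m) := by
      rw [hA] at hnxy
      push_neg at hnxy
      have := hnxy hxy
      omega
    have hcard : Fintype.card (Fin n) = n := Fintype.card_fin n
    constructor
    · intro hnxz
      rw [hA] at hnxz
      push_neg at hnxz
      have hz := hnxz (fun h => hzx h.symm)
      rcases hside with ⟨hx, hy⟩ | ⟨hx, hy⟩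
      · have hzv : m < z.val := by omega
        have e1 := degLout x hx; have e2 := degLin x hx
        have e3 := degRout y hy; have e4 := degRin y hy
        have e5 := degRin z hzv
        unfold deg
        rw [e1, e2, e3, e4, e5, hcard]
        push_cast
        omega
      · have hzv : z.val < m := by omega
        have e1 := degRout x hx; have e2 := degRin x hx
        have e3 := degLout y hy; have e4 := degLin y hy
        have e5 := degLin z hzv
        unfold deg
        rw [e1, e2, e3, e4, e5, hcard]
        push_cast
        omega
    · intro hnzx
      rw [hA] at hnzx
      push_neg at hnzx
      have hz := hnzx hzx
      rcases hside with ⟨hx, hy⟩ | ⟨hx, hy⟩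
      · have hzv : m < z.val := by omega
        have e1 := degLout x hx; have e2 := degLin x hx
        have e3 := degRout y hy; have e4 := degRin y hy
        have e5 := degRout z hzv
        unfold deg
        rw [e1, e2, e3, e4, e5, hcard]
        push_cast
        omega
      · have hzv : z.val < m := by omega
        have e1 := degRout x hx; have e2 := degRin x hx
        have e3 := degLout y hy; have e4 := degLin y hy
        have e5 := degLout z hzv
        unfold deg
        rw [e1, e2, e3, e4, e5, hcard]
        push_cast
        omega
  · -- no Hamiltonian bypass
    -- adjacency respects sides away from the cut vertex
    have hside_adj : ∀ u v : Fin n, A u v → u.val ≠ m → v.val ≠ m →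
        (u.val < m ↔ v.val < m) := by
      intro u v huv hu hv
      rw [hA] at huv
      rcases huv with ⟨-, h⟩
      omega
    -- sides are constant along chains avoiding the cut vertex
    have hhead : ∀ (p : List (Fin n)) (x : Fin n), (x :: p).Chain' A →
        (∀ v ∈ x :: p, v.val ≠ m) → ∀ a ∈ x :: p, (a.val < m ↔ x.val < m) := by
      intro p
      induction p with
      | nil =>
        intro x _ _ a ha
        simp only [List.mem_singleton] at ha
        subst ha; rfl
      | cons y rest ih =>
        intro x hch hv a ha
        have hxy : A x y := (List.isChain_cons_cons.mp hch).1
        have h1 : (y.val < m ↔ x.val < m) :=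
          (hside_adj x y hxy (hv x (by simp)) (hv y (by simp))).symm
        rcases List.mem_cons.mp ha with rfl | ha'
        · rfl
        · have := ih y (List.isChain_cons_cons.mp hch).2
            (fun v hv' => hv v (List.mem_cons_of_mem _ hv')) a ha'
          exact this.trans h1
    have hconst : ∀ (p : List (Fin n)), p.Chain' A →
        (∀ v ∈ p, v.val ≠ m) → ∀ a ∈ p, ∀ b ∈ p, (a.val < m ↔ b.val < m) := by
      intro p hch hv a ha b hb
      cases p with
      | nil => simp at ha
      | cons x rest =>
        exact (hhead rest x hch hv a ha).trans (hhead rest x hch hv b hb).symm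
    rintro ⟨l, hnd, hall, hch, harc⟩
    set mv : Fin n := ⟨m, hmn⟩ with hmv
    have hmvval : mv.val = m := rfl
    obtain ⟨s, t, rfl⟩ := List.append_of_mem (hall mv)
    -- nodup facts
    have hmvs : mv ∉ s := by
      intro hmem
      exact List.disjoint_of_nodup_append hnd hmem (by simp)
    have hmvt : mv ∉ t := by
      have := (List.nodup_append.mp hnd).2.1
      exact (List.nodup_cons.mp this).1
    have hvs : ∀ v ∈ s, v.val ≠ m := by
      intro v hv hvm
      exact hmvs (by rwa [show v = mv from Fin.ext hvm] at hv)
    have hvt : ∀ v ∈ t, v.val ≠ m := by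
      intro v hv hvm
      exact hmvt (by rwa [show v = mv from Fin.ext hvm] at hv)
    -- chains on the pieces
    have hchs : s.Chain' A := (List.isChain_append.mp hch).1
    have hcht : t.Chain' A := ((List.isChain_append.mp hch).2.1).tail
    -- the two extreme vertices
    have ha0 : (⟨0, by omega⟩ : Fin n) ∈ s ++ mv :: t := hall _
    have hb0 : (⟨n-1, by omega⟩ : Fin n) ∈ s ++ mv :: t := hall _
    set a0 : Fin n := ⟨0, by omega⟩ with ha0def
    set b0 : Fin n := ⟨n-1, by omega⟩ with hb0def
    have ha0val : a0.val = 0 := rfl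
    have hb0val : b0.val = n - 1 := rfl
    have ha0m : a0.val < m := by omega
    have hb0m : m < b0.val := by omega
    have ha0' : a0 ∈ s ∨ a0 ∈ t := by
      rcases List.mem_append.mp ha0 with h | h
      · exact Or.inl h
      · rcases List.mem_cons.mp h with h | h
        · exact absurd (congrArg Fin.val h) (by omega)
        · exact Or.inr h
    have hb0' : b0 ∈ s ∨ b0 ∈ t := by
      rcases List.mem_append.mp hb0 with h | h
      · exact Or.inl h
      · rcases List.mem_cons.mp h with h | h
        · exact absurd (congrArg Fin.val h) (by omega)
        · exact Or.inr h
    -- a0 and b0 cannot lie in the same piece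
    have hsplit : (a0 ∈ s ∧ b0 ∈ t) ∨ (a0 ∈ t ∧ b0 ∈ s) := by
      rcases ha0' with ha | ha <;> rcases hb0' with hb | hb
      · exact absurd (hconst s hchs hvs a0 ha b0 hb) (by omega)
      · exact Or.inl ⟨ha, hb⟩
      · exact Or.inr ⟨ha, hb⟩
      · exact absurd (hconst t hcht hvt a0 ha b0 hb) (by omega)
    have hsne : s ≠ [] := by
      rcases hsplit with ⟨h, _⟩ | ⟨_, h⟩ <;> exact List.ne_nil_of_mem h
    have htne : t ≠ [] := by
      rcases hsplit with ⟨_, h⟩ | ⟨h, _⟩ <;> exact List.ne_nil_of_mem h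
    have hlne : s ++ mv :: t ≠ [] := by simp
    -- head and last
    have hhd : (s ++ mv :: t).head hlne = s.head hsne :=
      List.head_append_of_ne_nil hsne
    have hlast : (s ++ mv :: t).getLast hlne = t.getLast htne :=
      (List.getLast_append_of_right_ne_nil s (mv :: t) (List.cons_ne_nil _ _)).trans
        (List.getLast_cons htne)
    have hheadmem : (s ++ mv :: t).head hlne ∈ s := hhd ▸ List.head_mem hsne
    have hlastmem : (s ++ mv :: t).getLast hlne ∈ t := hlast ▸ List.getLast_mem htne
    have harc' := harc hlne
    have hadj := hside_adj _ _ harc' (hvs _ hheadmem) (hvt _ hlastmem)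
    -- but head and last are on opposite sides
    rcases hsplit with ⟨ha, hb⟩ | ⟨ha, hb⟩
    · have h1 := hconst s hchs hvs _ hheadmem a0 ha
      have h2 := hconst t hcht hvt _ hlastmem b0 hb
      omega
    · have h1 := hconst s hchs hvs _ hheadmem b0 hb
      have h2 := hconst t hcht hvt _ hlastmem a0 ha
      omega
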